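/- Let n ≥ 2 and z ∈ ℂ, and let t̄^1, …, t̄^{n−1} be finite families of complex numbers such that t^s_m ∉ {z_s, z_{s+1}} for all 1 ≤ s ≤ n−1 and all m. Define the families w̄^0_I = (z, z+c/2), w̄^0_II = ∅, and, for 1 ≤ s ≤ n−1, w̄^s_I = (z_s) and w̄^s_II = t̄^s ∪ (z). Then (1/h(w̄^{n−1}_I, z_{n−1})) · ∏_{s=1}^{n−1} [ h(w̄^s_II, w̄^{s−1}_I) · g(w̄^s_I, w̄^s_II) ] / [ h(w̄^s_II, w̄^s_I) · g(w̄^s_I, w̄^{s−1}_II) ] = −(1/κ) · h(t̄^1, z) · g(z_n, t̄^{n−1}). -/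

import Mathlib

noncomputable section

/-- `g(u,v) = c/(u − v)`. -/
def gf (c u v : ℂ) : ℂ := c / (u - v)

/-- `h(u,v) = (u − v + c)/c`. -/
def hf (c u v : ℂ) : ℂ := (u - v + c) / c

/-- The shifted point `z_k = z − c(k − 1/2)` (with `k` a complex parameter). -/
def zpt (c z k : ℂ) : ℂ := z - c * (k - 1 / 2)

/-- A two-variable function evaluated on two finite families means the product
over all pairs of elements, one from each family; empty products equal 1. -/
def pairProd (x : ℂ → ℂ → ℂ) (A B : List ℂ) : ℂ :=
  (A.map fun a => (B.map (x a)).prod).prod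

/-- The family `w̄^k_I`: `(z, z + c/2)` for `k = 0` and `(z_k)` for `k ≥ 1`. -/
def wI (c z : ℂ) (k : ℕ) : List ℂ :=
  if k = 0 then [z, z + c / 2] else [zpt c z (k : ℂ)]

/-- The family `w̄^k_II`: empty for `k = 0` and `t̄^k ∪ (z)` for `k ≥ 1`. -/
def wII (c z : ℂ) (t : ℕ → ℕ → ℂ) (r : ℕ → ℕ) (k : ℕ) : List ℂ :=
  if k = 0 then [] else z :: List.ofFn fun m : Fin (r k) => t k m

namespace S13

lemma zpt_succ (c z k : ℂ) : zpt c z k = zpt c z (k + 1) + c := by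
  simp only [zpt]; ring

lemma hf_z_zpt {c : ℂ} (hc : c ≠ 0) (z k : ℂ) : hf c z (zpt c z k) = k + 1/2 := by
  rw [hf, zpt, div_eq_iff hc]; ring

lemma gf_zpt_z {c : ℂ} (hc : c ≠ 0) (z k : ℂ) (hk : k - 1/2 ≠ 0) :
    gf c (zpt c z k) z = -(k - 1/2)⁻¹ := by
  rw [gf, zpt, show z - c * (k - 1/2) - z = -(c * (k-1/2)) by ring, div_neg,
    div_mul_cancel_left₀ hc]

lemma hg_neg_one {c : ℂ} (hc : c ≠ 0) {u w : ℂ} (h : u ≠ w) :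
    hf c u (w + c) * gf c w u = -1 := by
  have h1 : w - u ≠ 0 := sub_ne_zero.mpr (Ne.symm h)
  rw [hf, gf]
  field_simp
  ring

lemma hf_ne_zero {c : ℂ} (hc : c ≠ 0) {u w : ℂ} (h : u ≠ w) : hf c u (w + c) ≠ 0 := by
  rw [hf, show u - (w + c) + c = u - w by ring]
  exact div_ne_zero (sub_ne_zero.mpr h) hc

lemma gf_ne_zero {c : ℂ} (hc : c ≠ 0) {u v : ℂ} (h : u ≠ v) : gf c u v ≠ 0 :=
  div_ne_zero hc (sub_ne_zero.mpr h)

lemma half_sub_ne (n : ℕ) (h : 1 ≤ n) : (n : ℂ) - 1/2 ≠ 0 := by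
  intro h0
  have h2 : ((2*n : ℕ) : ℂ) = ((1 : ℕ) : ℂ) := by push_cast; linear_combination 2*h0
  have : 2*n = 1 := Nat.cast_injective h2
  omega

lemma half_add_ne (n : ℕ) : (n : ℂ) + 1/2 ≠ 0 := by
  intro h0
  have h2 : ((2*n+1 : ℕ) : ℂ) = ((0 : ℕ) : ℂ) := by push_cast; linear_combination 2*h0
  have : 2*n+1 = 0 := Nat.cast_injective h2
  omega



def GG (c z : ℂ) (t : ℕ → ℕ → ℂ) (r : ℕ → ℕ) (s : ℕ) (w : ℂ) : ℂ :=
  ∏ m : Fin (r s), gf c w (t s m)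

def Ft (c z : ℂ) (t : ℕ → ℕ → ℂ) (r : ℕ → ℕ) (s : ℕ) : ℂ :=
  pairProd (hf c) (wII c z t r s) (wI c z (s - 1)) *
      pairProd (gf c) (wI c z s) (wII c z t r s) /
    (pairProd (hf c) (wII c z t r s) (wI c z s) *
      pairProd (gf c) (wI c z s) (wII c z t r (s - 1)))

lemma GG_ne_zero {c : ℂ} (hc : c ≠ 0) (z : ℂ) (t : ℕ → ℕ → ℂ) (r : ℕ → ℕ) (s : ℕ) {w : ℂ}
    (h : ∀ m < r s, t s m ≠ w) : GG c z t r s w ≠ 0 :=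
  Finset.prod_ne_zero_iff.mpr fun m _ => gf_ne_zero hc (Ne.symm (h m m.2))

lemma termOne {c : ℂ} (hc : c ≠ 0) (z : ℂ) (t : ℕ → ℕ → ℂ) (r : ℕ → ℕ)
    (h1 : ∀ m < r 1, t 1 m ≠ zpt c z 1 ∧ t 1 m ≠ zpt c z 2) :
    Ft c z t r 1 = -((3:ℂ)/2)⁻¹ * (∏ m : Fin (r 1), hf c (t 1 m) z) * GG c z t r 1 (zpt c z 2) := by
  simp only [Ft, wI, wII, GG, if_pos rfl, if_neg (one_ne_zero), Nat.sub_self,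
    pairProd, List.map_cons, List.map_nil, List.map_ofFn, List.prod_cons, List.prod_nil,
    List.prod_ofFn, Function.comp, reduceIte, Nat.cast_one, Nat.cast_zero, mul_one]
  have hz1 : z + c / 2 = zpt c z 1 + c := by simp [zpt]; ring
  have hz2 : zpt c z 1 = zpt c z 2 + c := by simp [zpt]; ring
  have e1 : hf c z z = 1 := by simp [hf, hc]
  have e2 : hf c z (z + c / 2) = 1 / 2 := by
    rw [show z + c / 2 = zpt c z 0 by simp [zpt]; ring, hf_z_zpt hc]; norm_num
  have e3 : gf c (zpt c z 1) z = -2 := by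
    rw [gf_zpt_z hc z 1 (by norm_num)]; norm_num
  have e4 : hf c z (zpt c z 1) = 3 / 2 := by
    rw [hf_z_zpt hc]; norm_num
  have hAB : (∏ m : Fin (r 1), hf c (t 1 m) (z + c / 2)) *
      (∏ m : Fin (r 1), gf c (zpt c z 1) (t 1 m)) =
      (∏ m : Fin (r 1), gf c (zpt c z 2) (t 1 m)) *
      (∏ m : Fin (r 1), hf c (t 1 m) (zpt c z 1)) := by
    have p1 : ∀ m : Fin (r 1), hf c (t 1 m) (z + c / 2) * gf c (zpt c z 1) (t 1 m) = -1 :=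
      fun m => by rw [hz1]; exact hg_neg_one hc (h1 m m.2).1
    have p2 : ∀ m : Fin (r 1), gf c (zpt c z 2) (t 1 m) * hf c (t 1 m) (zpt c z 1) = -1 :=
      fun m => by rw [mul_comm, hz2]; exact hg_neg_one hc (h1 m m.2).2
    rw [← Finset.prod_mul_distrib, ← Finset.prod_mul_distrib]
    simp only [p1, p2]
  have hP3 : (∏ m : Fin (r 1), hf c (t 1 m) (zpt c z 1)) ≠ 0 :=
    Finset.prod_ne_zero_iff.mpr fun m _ => by
      rw [hz2]; exact hf_ne_zero hc (h1 m m.2).2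
  rw [Finset.prod_mul_distrib, e1, e2, e3, e4]
  rw [div_eq_iff (mul_ne_zero (by norm_num) hP3)]
  linear_combination (-(∏ m : Fin (r 1), hf c (t 1 m) z)) * hAB

lemma termGen {c : ℂ} (hc : c ≠ 0) (z : ℂ) (t : ℕ → ℕ → ℂ) (r : ℕ → ℕ) (s : ℕ) (hs : 2 ≤ s)
    (hA : ∀ m < r s, t s m ≠ zpt c z (s : ℂ))
    (hB : ∀ m < r s, t s m ≠ zpt c z ((s : ℂ) + 1))
    (hC : ∀ m < r (s - 1), t (s - 1) m ≠ zpt c z (s : ℂ)) :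
    Ft c z t r s = ((s : ℂ) - 1 / 2) * ((s : ℂ) + 1 / 2)⁻¹ *
      GG c z t r s (zpt c z ((s : ℂ) + 1)) * (GG c z t r (s - 1) (zpt c z (s : ℂ)))⁻¹ := by
  simp only [Ft, wI, wII, GG, if_neg (by omega : ¬ s = 0), if_neg (by omega : ¬ s - 1 = 0),
    pairProd, List.map_cons, List.map_nil, List.map_ofFn, List.prod_cons, List.prod_nil,
    List.prod_ofFn, Function.comp, mul_one]
  rw [Nat.cast_sub (by omega : 1 ≤ s), Nat.cast_one]
  have hzA : zpt c z ((s : ℂ) - 1) = zpt c z (s : ℂ) + c := by simp [zpt]; ring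
  have hzB : zpt c z (s : ℂ) = zpt c z ((s : ℂ) + 1) + c := by simp [zpt]; ring
  have e1 : hf c z (zpt c z ((s : ℂ) - 1)) = (s : ℂ) - 1 / 2 := by rw [hf_z_zpt hc]; ring
  have e2 : gf c (zpt c z (s : ℂ)) z = -((s : ℂ) - 1 / 2)⁻¹ :=
    gf_zpt_z hc z s (half_sub_ne s (by omega))
  have e3 : hf c z (zpt c z (s : ℂ)) = (s : ℂ) + 1 / 2 := hf_z_zpt hc z s
  have p1 : ∀ m : Fin (r s), hf c (t s m) (zpt c z ((s : ℂ) - 1)) * gf c (zpt c z (s : ℂ)) (t s m) = -1 :=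
    fun m => by rw [hzA]; exact hg_neg_one hc (hA m m.2)
  have p2 : ∀ m : Fin (r s), gf c (zpt c z ((s : ℂ) + 1)) (t s m) * hf c (t s m) (zpt c z (s : ℂ)) = -1 :=
    fun m => by rw [mul_comm, hzB]; exact hg_neg_one hc (hB m m.2)
  have hAB : (∏ m : Fin (r s), hf c (t s m) (zpt c z ((s : ℂ) - 1))) *
      (∏ m : Fin (r s), gf c (zpt c z (s : ℂ)) (t s m)) =
      (∏ m : Fin (r s), gf c (zpt c z ((s : ℂ) + 1)) (t s m)) *
      (∏ m : Fin (r s), hf c (t s m) (zpt c z (s : ℂ))) := by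
    rw [← Finset.prod_mul_distrib, ← Finset.prod_mul_distrib]
    simp only [p1, p2]
  have hP3 : (∏ m : Fin (r s), hf c (t s m) (zpt c z (s : ℂ))) ≠ 0 :=
    Finset.prod_ne_zero_iff.mpr fun m _ => by rw [hzB]; exact hf_ne_zero hc (hB m m.2)
  have hQ : (∏ m : Fin (r (s - 1)), gf c (zpt c z (s : ℂ)) (t (s - 1) m)) ≠ 0 :=
    Finset.prod_ne_zero_iff.mpr fun m _ => gf_ne_zero hc (Ne.symm (hC m m.2))
  rw [e1, e2, e3]
  have hm : ((s : ℂ) * 2 - 1) ≠ 0 := by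
    have := half_sub_ne s (by omega : 1 ≤ s)
    intro h0; exact this (by linear_combination h0 / 2)
  have hp : ((s : ℂ) * 2 + 1) ≠ 0 := by
    have := half_add_ne s
    intro h0; exact this (by linear_combination h0 / 2)
  field_simp [hP3, hQ, half_sub_ne s (by omega : 1 ≤ s), half_add_ne s]
  linear_combination hAB

lemma key {c : ℂ} (hc : c ≠ 0) (z : ℂ) (t : ℕ → ℕ → ℂ) (r : ℕ → ℕ) (n : ℕ) (hn : 2 ≤ n) :
    (∀ s : ℕ, 1 ≤ s → s ≤ n - 1 → ∀ m < r s,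
      t s m ≠ zpt c z (s : ℂ) ∧ t s m ≠ zpt c z ((s : ℂ) + 1)) →
    ∏ s ∈ Finset.Icc 1 (n - 1), Ft c z t r s =
      -((n : ℂ) - 1 / 2)⁻¹ * (∏ m : Fin (r 1), hf c (t 1 m) z) *
        GG c z t r (n - 1) (zpt c z (n : ℂ)) := by
  induction n, hn using Nat.le_induction with
  | base =>
    intro ht
    have h1 : ∀ m < r 1, t 1 m ≠ zpt c z 1 ∧ t 1 m ≠ zpt c z 2 := by
      intro m hm
      have := ht 1 le_rfl (by norm_num) m hm
      simpa [show (1:ℂ)+1 = 2 by norm_num] using this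
    rw [show (2 : ℕ) - 1 = 1 from rfl, Finset.Icc_self, Finset.prod_singleton,
      termOne hc z t r h1]
    norm_num
  | succ n hn ih =>
    intro ht
    have ihe := ih fun s h1 h2 m hm => ht s h1 (by omega) m hm
    obtain ⟨p, rfl⟩ : ∃ p, n = p + 2 := ⟨n - 2, by omega⟩
    have hA : ∀ m < r (p + 2), t (p + 2) m ≠ zpt c z ((p + 2 : ℕ) : ℂ) :=
      fun m hm => (ht (p + 2) (by omega) (by omega) m hm).1
    have hB : ∀ m < r (p + 2), t (p + 2) m ≠ zpt c z (((p + 2 : ℕ) : ℂ) + 1) :=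
      fun m hm => (ht (p + 2) (by omega) (by omega) m hm).2
    have hC : ∀ m < r (p + 1), t (p + 1) m ≠ zpt c z ((p + 2 : ℕ) : ℂ) := by
      intro m hm
      have := (ht (p + 1) (by omega) (by omega) m hm).2
      convert this using 3
      push_cast; ring
    have hstep := termGen hc z t r (p + 2) (by omega) hA hB (by simpa using hC)
    have hGne : GG c z t r (p + 1) (zpt c z (((p + 2 : ℕ)) : ℂ)) ≠ 0 :=
      GG_ne_zero hc z t r (p + 1) hC
    have hsplit : ∏ s ∈ Finset.Icc 1 (p + 2), Ft c z t r s =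
        (∏ s ∈ Finset.Icc 1 (p + 1), Ft c z t r s) * Ft c z t r (p + 2) := by
      rw [Finset.prod_Icc_succ_top (by omega : 1 ≤ p + 1 + 1)]
    simp only [Nat.add_sub_cancel]
    rw [hsplit, show p + 2 - 1 = p + 1 from rfl] at *
    rw [ihe, hstep]
    have hm1 : ((p + 2 : ℕ) : ℂ) - 1 / 2 ≠ 0 := half_sub_ne (p + 2) (by omega)
    have hm2 : ((p + 2 : ℕ) : ℂ) + 1 / 2 ≠ 0 := half_add_ne (p + 2)
    have hm3 : ((p + 2 + 1 : ℕ) : ℂ) - 1 / 2 ≠ 0 := half_sub_ne (p + 3) (by omega)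
    have harg : (((p + 2 : ℕ) : ℂ) + 1) = ((p + 2 + 1 : ℕ) : ℂ) := by push_cast; ring
    rw [harg]
    have hhalf : ((p + 2 : ℕ) : ℂ) + 1 / 2 = ((p + 2 + 1 : ℕ) : ℂ) - 1 / 2 := by push_cast; ring
    rw [hhalf]
    set H := ∏ m : Fin (r 1), hf c (t 1 m) z with hH
    set G1 := GG c z t r (p + 1) (zpt c z ((p + 2 : ℕ) : ℂ)) with hG1
    set G2 := GG c z t r (p + 2) (zpt c z ((p + 2 + 1 : ℕ) : ℂ)) with hG2
    set X : ℂ := ((p + 2 : ℕ) : ℂ) with hX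
    set Y : ℂ := ((p + 2 + 1 : ℕ) : ℂ) with hY
    have hi1 : (X - 1 / 2) * (X - 1 / 2)⁻¹ = 1 := mul_inv_cancel₀ hm1
    have hi2 : G1 * G1⁻¹ = 1 := mul_inv_cancel₀ hGne
    linear_combination (-(Y - 1 / 2)⁻¹ * H * G2 * (G1 * G1⁻¹)) * hi1 +
      (-(Y - 1 / 2)⁻¹ * H * G2) * hi2

end S13

/-- for `n ≥ 2` and Bethe parameters with
`t^s_m ∉ {z_s, z_{s+1}}` for `1 ≤ s ≤ n−1`, the product identity
`(1/h(w̄^{n−1}_I, z_{n−1})) ∏_{s=1}^{n−1}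
   [h(w̄^s_II, w̄^{s−1}_I) g(w̄^s_I, w̄^s_II)] / [h(w̄^s_II, w̄^s_I) g(w̄^s_I, w̄^{s−1}_II)]
 = −(1/κ) h(t̄^1, z) g(z_n, t̄^{n−1})` holds, where `κ = n − 1/2`. -/
theorem statement13 (n : ℕ) (hn : 2 ≤ n) (c : ℂ) (hc : c ≠ 0) (z : ℂ)
    (t : ℕ → ℕ → ℂ) (r : ℕ → ℕ)
    (ht : ∀ s : ℕ, 1 ≤ s → s ≤ n - 1 → ∀ m < r s,
      t s m ≠ zpt c z (s : ℂ) ∧ t s m ≠ zpt c z ((s : ℂ) + 1)) :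
    (pairProd (hf c) (wI c z (n - 1)) [zpt c z ((n - 1 : ℕ) : ℂ)])⁻¹ *
        ∏ s ∈ Finset.Icc 1 (n - 1),
          pairProd (hf c) (wII c z t r s) (wI c z (s - 1)) *
              pairProd (gf c) (wI c z s) (wII c z t r s) /
            (pairProd (hf c) (wII c z t r s) (wI c z s) *
              pairProd (gf c) (wI c z s) (wII c z t r (s - 1))) =
      -((n : ℂ) - 1 / 2)⁻¹ *
          pairProd (hf c) (List.ofFn fun m : Fin (r 1) => t 1 m) [z] *
          pairProd (gf c) [zpt c z (n : ℂ)] (List.ofFn fun m : Fin (r (n - 1)) => t (n - 1) m) := by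
  have hn1 : ¬ (n - 1 = 0) := by omega
  have hpre : pairProd (hf c) (wI c z (n - 1)) [zpt c z ((n - 1 : ℕ) : ℂ)] = 1 := by
    simp [wI, if_neg hn1, pairProd, hf, hc]
  rw [hpre, inv_one, one_mul]
  have hkey := S13.key hc z t r n hn ht
  have hft : ∏ s ∈ Finset.Icc 1 (n - 1),
      (pairProd (hf c) (wII c z t r s) (wI c z (s - 1)) *
          pairProd (gf c) (wI c z s) (wII c z t r s) /
        (pairProd (hf c) (wII c z t r s) (wI c z s) *
          pairProd (gf c) (wI c z s) (wII c z t r (s - 1)))) =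
      ∏ s ∈ Finset.Icc 1 (n - 1), S13.Ft c z t r s := rfl
  rw [hft, hkey]
  simp only [pairProd, S13.GG, List.map_cons, List.map_nil, List.map_ofFn,
    List.prod_cons, List.prod_nil, List.prod_ofFn, Function.comp, mul_one]

end
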